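/- Let A = UΣVᵀ be the SVD of A ∈ ℝ^{m×n}, partitioned so that Σ = diag(Σ₁, Σ₂) with Σ₁ ∈ ℝ^{k×k} and V = [V₁, V₂] conformally. Let Ω ∈ ℝ^{n×r}, set Ω₁ = V₁ᵀΩ and Ω₂ = V₂ᵀΩ, and assume Ω₁ has full row rank. Then for the orthogonal projector P_{AΩ} onto range(AΩ), ‖(I − P_{AΩ})A‖² ≤ ‖Σ₂‖² + ‖Σ₂ Ω₂ Ω₁⁺‖², in the Frobenius norm (and also in the spectral norm). -/

import Mathlib

open Matrix

/-- The four Penrose conditions: `Ap` is the Moore–Penrose pseudoinverse of `A`. -/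
def IsMoorePenrose {m n : Type*} [Fintype m] [Fintype n]
    (A : Matrix m n ℝ) (Ap : Matrix n m ℝ) : Prop :=
  A * Ap * A = A ∧ Ap * A * Ap = Ap ∧ (A * Ap)ᵀ = A * Ap ∧ (Ap * A)ᵀ = Ap * A

/-- Spectral (operator) norm of a real matrix, induced by the Euclidean norms. -/
noncomputable def specNorm {m n : Type*} [Fintype m] [Fintype n] [DecidableEq n]
    (A : Matrix m n ℝ) : ℝ :=
  ‖LinearMap.toContinuousLinearMap (Matrix.toEuclideanLin A)‖

/-- Frobenius norm of a real matrix. -/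
noncomputable def frobNorm {m n : Type*} [Fintype m] [Fintype n]
    (A : Matrix m n ℝ) : ℝ :=
  Real.sqrt (∑ i, ∑ j, (A i j) ^ 2)

/-! ### Auxiliary lemmas -/

lemma eucl_norm_sq {p : Type*} [Fintype p] (y : EuclideanSpace ℝ p) : ‖y‖^2 = ∑ i, (y i)^2 := by
  rw [EuclideanSpace.norm_eq, Real.sq_sqrt (by positivity)]
  simp [sq_abs]

lemma dot_mulVec_self {m n : Type*} [Fintype m] [Fintype n]
    (M : Matrix m n ℝ) (v : n → ℝ) :
    (M *ᵥ v) ⬝ᵥ (M *ᵥ v) = v ⬝ᵥ ((Mᵀ * M) *ᵥ v) := by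
  rw [← Matrix.mulVec_mulVec, Matrix.dotProduct_mulVec, Matrix.mulVec_transpose,
    dotProduct_comm]

lemma norm_toEuc_sq {m n : Type*} [Fintype m] [Fintype n] [DecidableEq n]
    (M : Matrix m n ℝ) (x : EuclideanSpace ℝ n) :
    ‖toEuclideanLin M x‖ ^ 2 = (WithLp.equiv 2 _ x) ⬝ᵥ ((Mᵀ * M) *ᵥ (WithLp.equiv 2 _ x)) := by
  rw [eucl_norm_sq, ← dot_mulVec_self]
  simp only [toEuclideanLin_apply, dotProduct]
  exact Finset.sum_congr rfl fun i _ => sq _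

lemma specNorm_nonneg' {m n : Type*} [Fintype m] [Fintype n] [DecidableEq n]
    (A : Matrix m n ℝ) : 0 ≤ specNorm A := norm_nonneg _

lemma le_specNorm {m n : Type*} [Fintype m] [Fintype n] [DecidableEq n]
    (A : Matrix m n ℝ) (x : EuclideanSpace ℝ n) :
    ‖toEuclideanLin A x‖ ≤ specNorm A * ‖x‖ :=
  (LinearMap.toContinuousLinearMap (Matrix.toEuclideanLin A)).le_opNorm x

lemma specNorm_le_bound {m n : Type*} [Fintype m] [Fintype n] [DecidableEq n]
    (A : Matrix m n ℝ) {c : ℝ} (hc : 0 ≤ c)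
    (h : ∀ x : EuclideanSpace ℝ n, ‖toEuclideanLin A x‖ ≤ c * ‖x‖) : specNorm A ≤ c :=
  ContinuousLinearMap.opNorm_le_bound _ hc h

lemma toEuc_mul {m n p : Type*} [Fintype m] [Fintype n] [Fintype p] [DecidableEq n] [DecidableEq p]
    (A : Matrix m n ℝ) (B : Matrix n p ℝ) (x : EuclideanSpace ℝ p) :
    toEuclideanLin (A * B) x = toEuclideanLin A (toEuclideanLin B x) := by
  simp [toEuclideanLin_apply, Matrix.mulVec_mulVec]

lemma specNorm_mul_le {m n p : Type*} [Fintype m] [Fintype n] [Fintype p] [DecidableEq n]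
    [DecidableEq p] (A : Matrix m n ℝ) (B : Matrix n p ℝ) :
    specNorm (A * B) ≤ specNorm A * specNorm B := by
  apply specNorm_le_bound _ (mul_nonneg (specNorm_nonneg' A) (specNorm_nonneg' B))
  intro x
  rw [toEuc_mul]
  calc ‖toEuclideanLin A (toEuclideanLin B x)‖ ≤ specNorm A * ‖toEuclideanLin B x‖ :=
        le_specNorm A _
    _ ≤ specNorm A * (specNorm B * ‖x‖) :=
        mul_le_mul_of_nonneg_left (le_specNorm B x) (specNorm_nonneg' A)
    _ = specNorm A * specNorm B * ‖x‖ := by ring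

lemma specNorm_le_one_of_orth {m n : Type*} [Fintype m] [Fintype n] [DecidableEq n]
    (U : Matrix m n ℝ) (hU : Uᵀ * U = 1) : specNorm U ≤ 1 := by
  apply specNorm_le_bound _ zero_le_one
  intro x
  rw [one_mul]
  have h : ‖toEuclideanLin U x‖ ^ 2 = ‖x‖ ^ 2 := by
    rw [norm_toEuc_sq, hU, Matrix.one_mulVec, eucl_norm_sq]
    simp [dotProduct, sq]
  have heq : ‖toEuclideanLin U x‖ = ‖x‖ := by
    have h1 := Real.sqrt_sq (norm_nonneg (toEuclideanLin U x))
    have h2 := Real.sqrt_sq (norm_nonneg x)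
    rw [← h1, ← h2, h]
  exact le_of_eq heq

lemma inner_eq_dot {p : Type*} [Fintype p] (x y : EuclideanSpace ℝ p) :
    (inner ℝ x y : ℝ) = (WithLp.equiv 2 _ x) ⬝ᵥ (WithLp.equiv 2 _ y) := by
  simp [PiLp.inner_apply, RCLike.inner_apply, dotProduct, mul_comm]

lemma specNorm_le_one_of_proj {n : Type*} [Fintype n] [DecidableEq n]
    (R : Matrix n n ℝ) (hsym : Rᵀ = R) (hidem : R * R = R) : specNorm R ≤ 1 := by
  apply specNorm_le_bound _ zero_le_one
  intro x
  rw [one_mul]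
  have h : ‖toEuclideanLin R x‖ ^ 2 = (inner ℝ x (toEuclideanLin R x) : ℝ) := by
    rw [norm_toEuc_sq, hsym, hidem, inner_eq_dot]
    congr 1
  have h2 : ‖toEuclideanLin R x‖ ^ 2 ≤ ‖x‖ * ‖toEuclideanLin R x‖ :=
    h ▸ real_inner_le_norm x _
  rcases eq_or_lt_of_le (norm_nonneg (toEuclideanLin R x)) with h0 | h0
  · rw [← h0]; exact norm_nonneg x
  · nlinarith [h2]

lemma specNorm_neg {m n : Type*} [Fintype m] [Fintype n] [DecidableEq n]
    (A : Matrix m n ℝ) : specNorm (-A) = specNorm A := by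
  unfold specNorm
  rw [map_neg, map_neg, norm_neg]

lemma cauchy2 (a b p q : ℝ) (hp : 0 ≤ p) (hq : 0 ≤ q) (ha : 0 ≤ a) (hb : 0 ≤ b) :
    a * p + b * q ≤ Real.sqrt (a^2 + b^2) * Real.sqrt (p^2 + q^2) := by
  rw [← Real.sqrt_mul (by positivity)]
  have h1 : a * p + b * q = Real.sqrt ((a*p + b*q)^2) := (Real.sqrt_sq (by positivity)).symm
  rw [h1]
  apply Real.sqrt_le_sqrt
  nlinarith [sq_nonneg (a*q - b*p)]

lemma specNorm_blocks_le {m₁ m₂ n₁ n₂ : Type*} [Fintype m₁] [Fintype m₂] [Fintype n₁] [Fintype n₂]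
    [DecidableEq n₁] [DecidableEq n₂]
    (C : Matrix m₂ n₁ ℝ) (D : Matrix m₂ n₂ ℝ) :
    specNorm (Matrix.fromBlocks (0 : Matrix m₁ n₁ ℝ) (0 : Matrix m₁ n₂ ℝ) C D)
      ≤ Real.sqrt (specNorm C ^ 2 + specNorm D ^ 2) := by
  apply specNorm_le_bound _ (Real.sqrt_nonneg _)
  intro x
  set w : (n₁ ⊕ n₂) → ℝ := WithLp.equiv 2 _ x with hw
  set x₁ : EuclideanSpace ℝ n₁ := (WithLp.equiv 2 (n₁ → ℝ)).symm (fun i => w (Sum.inl i)) with hx1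
  set x₂ : EuclideanSpace ℝ n₂ := (WithLp.equiv 2 (n₂ → ℝ)).symm (fun i => w (Sum.inr i)) with hx2
  have hxsq : ‖x‖^2 = ‖x₁‖^2 + ‖x₂‖^2 := by
    rw [eucl_norm_sq, eucl_norm_sq, eucl_norm_sq, Fintype.sum_sum_type]
    rfl
  have hBx : ‖toEuclideanLin (Matrix.fromBlocks (0 : Matrix m₁ n₁ ℝ) (0 : Matrix m₁ n₂ ℝ) C D) x‖^2
      = ‖toEuclideanLin C x₁ + toEuclideanLin D x₂‖^2 := by
    rw [eucl_norm_sq, eucl_norm_sq, Fintype.sum_sum_type]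
    simp only [toEuclideanLin_apply]
    have hmv : ∀ j, (Matrix.fromBlocks (0 : Matrix m₁ n₁ ℝ) (0 : Matrix m₁ n₂ ℝ) C D *ᵥ w) j
        = Sum.elim (fun _ => (0:ℝ))
          (fun i => (C *ᵥ (fun i => w (Sum.inl i))) i + (D *ᵥ (fun i => w (Sum.inr i))) i) j := by
      intro j
      cases j with
      | inl i => simp [Matrix.mulVec, dotProduct, Fintype.sum_sum_type]
      | inr i => simp [Matrix.mulVec, dotProduct, Fintype.sum_sum_type]
    simp only [show x.ofLp = w from rfl, hmv]
    simp only [Sum.elim_inl, Sum.elim_inr]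
    simp only [PiLp.add_apply, WithLp.ofLp_add, Pi.add_apply, WithLp.equiv_symm_apply, PiLp.toLp_apply]
    simp [hx1, hx2]
  have h1 : ‖toEuclideanLin C x₁ + toEuclideanLin D x₂‖ ≤ specNorm C * ‖x₁‖ + specNorm D * ‖x₂‖ :=
    le_trans (norm_add_le _ _) (add_le_add (le_specNorm C x₁) (le_specNorm D x₂))
  have h2 : specNorm C * ‖x₁‖ + specNorm D * ‖x₂‖
      ≤ Real.sqrt (specNorm C ^ 2 + specNorm D ^ 2) * Real.sqrt (‖x₁‖^2 + ‖x₂‖^2) :=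
    cauchy2 _ _ _ _ (norm_nonneg _) (norm_nonneg _) (specNorm_nonneg' _) (specNorm_nonneg' _)
  have h3 : Real.sqrt (‖x₁‖^2 + ‖x₂‖^2) = ‖x‖ := by
    rw [← hxsq, Real.sqrt_sq (norm_nonneg _)]
  have h4 : ‖toEuclideanLin (Matrix.fromBlocks (0 : Matrix m₁ n₁ ℝ) (0 : Matrix m₁ n₂ ℝ) C D) x‖
      = ‖toEuclideanLin C x₁ + toEuclideanLin D x₂‖ := by
    have := congrArg Real.sqrt hBx
    rwa [Real.sqrt_sq (norm_nonneg _), Real.sqrt_sq (norm_nonneg _)] at this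
  rw [h4, ← h3]
  exact le_trans h1 h2

lemma frobNorm_sq_eq {m n : Type*} [Fintype m] [Fintype n] (A : Matrix m n ℝ) :
    frobNorm A ^ 2 = ∑ i, ∑ j, (A i j) ^ 2 :=
  Real.sq_sqrt (by positivity)

lemma frobNorm_sq_trace {m n : Type*} [Fintype m] [Fintype n] (A : Matrix m n ℝ) :
    frobNorm A ^ 2 = Matrix.trace (Aᵀ * A) := by
  rw [frobNorm_sq_eq]
  simp only [Matrix.trace, Matrix.diag, Matrix.mul_apply, Matrix.transpose_apply, sq]
  exact Finset.sum_comm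

lemma trace_transpose_mul_self_nonneg {m n : Type*} [Fintype m] [Fintype n]
    (A : Matrix m n ℝ) : 0 ≤ Matrix.trace (Aᵀ * A) := by
  rw [← frobNorm_sq_trace]; positivity

lemma frobSq_proj {m n : Type*} [Fintype m] [Fintype n] [DecidableEq m]
    (Q : Matrix m m ℝ) (hsym : Qᵀ = Q) (hidem : Q * Q = Q) (M : Matrix m n ℝ) :
    frobNorm (Q * M) ^ 2 ≤ frobNorm M ^ 2 := by
  have h1 : ((1 : Matrix m m ℝ) - Q)ᵀ * ((1 : Matrix m m ℝ) - Q) = 1 - Q := by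
    rw [transpose_sub, transpose_one, hsym]
    simp [Matrix.sub_mul, Matrix.mul_sub, hidem]
  have h2 : (((1 : Matrix m m ℝ) - Q) * M)ᵀ * (((1 : Matrix m m ℝ) - Q) * M)
      = Mᵀ * M - (Q * M)ᵀ * (Q * M) := by
    rw [transpose_mul, Matrix.mul_assoc, ← Matrix.mul_assoc ((1 : Matrix m m ℝ) - Q)ᵀ, h1,
      transpose_mul, Matrix.mul_assoc, ← Matrix.mul_assoc Qᵀ, hsym, hidem]
    rw [Matrix.sub_mul, Matrix.one_mul, Matrix.mul_sub]
  have h3 := trace_transpose_mul_self_nonneg (((1 : Matrix m m ℝ) - Q) * M)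
  rw [h2, Matrix.trace_sub] at h3
  rw [frobNorm_sq_trace, frobNorm_sq_trace]
  linarith

lemma frobSq_orth_left {m n : Type*} [Fintype m] [Fintype n] [DecidableEq m]
    (U : Matrix m m ℝ) (hU : Uᵀ * U = 1) (M : Matrix m n ℝ) :
    frobNorm (U * M) ^ 2 = frobNorm M ^ 2 := by
  rw [frobNorm_sq_trace, frobNorm_sq_trace, transpose_mul, Matrix.mul_assoc,
    ← Matrix.mul_assoc Uᵀ, hU, Matrix.one_mul]

lemma frobSq_orth_right {m n : Type*} [Fintype m] [Fintype n] [DecidableEq n]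
    (W : Matrix n n ℝ) (hW : W * Wᵀ = 1) (M : Matrix m n ℝ) :
    frobNorm (M * W) ^ 2 = frobNorm M ^ 2 := by
  rw [frobNorm_sq_trace, frobNorm_sq_trace, transpose_mul, Matrix.mul_assoc,
    Matrix.trace_mul_comm, Matrix.mul_assoc, Matrix.mul_assoc, hW, Matrix.mul_one]

lemma frobSq_blocks {m₁ m₂ n₁ n₂ : Type*} [Fintype m₁] [Fintype m₂] [Fintype n₁] [Fintype n₂]
    (C : Matrix m₂ n₁ ℝ) (D : Matrix m₂ n₂ ℝ) :
    frobNorm (Matrix.fromBlocks (0 : Matrix m₁ n₁ ℝ) (0 : Matrix m₁ n₂ ℝ) C D) ^ 2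
      = frobNorm C ^ 2 + frobNorm D ^ 2 := by
  simp only [frobNorm_sq_eq]
  rw [Fintype.sum_sum_type]
  simp [Fintype.sum_sum_type, Finset.sum_add_distrib]

lemma frobNorm_neg {m n : Type*} [Fintype m] [Fintype n] (A : Matrix m n ℝ) :
    frobNorm (-A) = frobNorm A := by
  unfold frobNorm; simp

lemma proj_facts {a r : Type*} [Fintype a] [Fintype r] (Y : Matrix a r ℝ) (Gp : Matrix r r ℝ)
    (hYE : Y * (Gp * (Yᵀ * Y)) = Y) :
    (Y * Gp * Yᵀ)ᵀ = Y * Gp * Yᵀ ∧ (Y * Gp * Yᵀ) * (Y * Gp * Yᵀ) = Y * Gp * Yᵀ := by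
  have ht : Yᵀ * (Y * (Gpᵀ * Yᵀ)) = Yᵀ := by
    have h := congrArg Matrix.transpose hYE
    simpa [transpose_mul, Matrix.mul_assoc] using h
  constructor
  · have hs : Y * Gp * Yᵀ = (Y * Gp * Yᵀ)ᵀ := by
      calc Y * Gp * Yᵀ = Y * (Gp * Yᵀ) := by rw [Matrix.mul_assoc]
        _ = Y * (Gp * (Yᵀ * (Y * (Gpᵀ * Yᵀ)))) := by rw [ht]
        _ = (Y * (Gp * (Yᵀ * Y))) * (Gpᵀ * Yᵀ) := by simp only [Matrix.mul_assoc]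
        _ = Y * (Gpᵀ * Yᵀ) := by rw [hYE]
        _ = (Y * Gp * Yᵀ)ᵀ := by simp [transpose_mul, Matrix.mul_assoc]
    exact hs.symm
  · calc (Y * Gp * Yᵀ) * (Y * Gp * Yᵀ)
          = (Y * (Gp * (Yᵀ * Y))) * (Gp * Yᵀ) := by simp only [Matrix.mul_assoc]
      _ = Y * (Gp * Yᵀ) := by rw [hYE]
      _ = Y * Gp * Yᵀ := by rw [Matrix.mul_assoc]

lemma eq_zero_of_transpose_mul_self {m n : Type*} [Fintype m] [Fintype n]
    (M : Matrix m n ℝ) (h : Mᵀ * M = 0) : M = 0 := by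
  ext i j
  have hd := congrFun (congrFun h j) j
  simp only [Matrix.mul_apply, Matrix.transpose_apply, Matrix.zero_apply] at hd
  have hnn : ∀ i ∈ Finset.univ, (0:ℝ) ≤ M i j * M i j := fun i _ => mul_self_nonneg _
  have := (Finset.sum_eq_zero_iff_of_nonneg hnn).1 hd i (Finset.mem_univ i)
  simpa [mul_self_eq_zero] using this

/-- Deterministic error bound (Halko–Martinsson–Tropp): with
A = U · diag(Σ₁, Σ₂) · Vᵀ, Ω₁ = V₁ᵀΩ of full row rank, the projection error
satisfies ‖(I − P_{AΩ})A‖² ≤ ‖Σ₂‖² + ‖Σ₂Ω₂Ω₁⁺‖² in the Frobenius norm and in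
the spectral norm. -/
theorem stmt12 {k m' n' r : ℕ}
    (U : Matrix (Fin k ⊕ Fin m') (Fin k ⊕ Fin m') ℝ)
    (V : Matrix (Fin k ⊕ Fin n') (Fin k ⊕ Fin n') ℝ)
    (hU : Uᵀ * U = 1) (hU' : U * Uᵀ = 1)
    (hV : Vᵀ * V = 1) (hV' : V * Vᵀ = 1)
    (S1 : Matrix (Fin k) (Fin k) ℝ) (S2 : Matrix (Fin m') (Fin n') ℝ)
    (A : Matrix (Fin k ⊕ Fin m') (Fin k ⊕ Fin n') ℝ)
    (hA : A = U * Matrix.fromBlocks S1 0 0 S2 * Vᵀ)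
    (Ω : Matrix (Fin k ⊕ Fin n') (Fin r) ℝ)
    (Ω1p : Matrix (Fin r) (Fin k) ℝ)
    (hΩ1p : IsMoorePenrose ((V.submatrix id Sum.inl)ᵀ * Ω) Ω1p)
    (hfull : ((V.submatrix id Sum.inl)ᵀ * Ω) * Ω1p = 1)
    (Gp : Matrix (Fin r) (Fin r) ℝ)
    (hGp : IsMoorePenrose ((A * Ω)ᵀ * (A * Ω)) Gp) :
    frobNorm (A - A * Ω * Gp * (A * Ω)ᵀ * A) ^ 2 ≤
        frobNorm S2 ^ 2 +
          frobNorm (S2 * ((V.submatrix id Sum.inr)ᵀ * Ω) * Ω1p) ^ 2 ∧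
      specNorm (A - A * Ω * Gp * (A * Ω)ᵀ * A) ^ 2 ≤
        specNorm S2 ^ 2 +
          specNorm (S2 * ((V.submatrix id Sum.inr)ᵀ * Ω) * Ω1p) ^ 2 := by
  obtain ⟨hG1, -, -, hG4⟩ := hGp
  set Y : Matrix (Fin k ⊕ Fin m') (Fin r) ℝ := A * Ω with hYdef
  have hGsym : (Yᵀ * Y)ᵀ = Yᵀ * Y := by rw [transpose_mul, transpose_transpose]
  have hGE : (Yᵀ * Y) * (Gp * (Yᵀ * Y)) = Yᵀ * Y := by
    rw [← Matrix.mul_assoc]; exact hG1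
  have hEsym : (Gp * (Yᵀ * Y))ᵀ = Gp * (Yᵀ * Y) := hG4
  have hEG : (Gp * (Yᵀ * Y)) * (Yᵀ * Y) = Yᵀ * Y := by
    have h := congrArg Matrix.transpose hGE
    rwa [transpose_mul, hEsym, hGsym] at h
  have hMM : (Y * (Gp * (Yᵀ * Y)) - Y)ᵀ * (Y * (Gp * (Yᵀ * Y)) - Y) = 0 := by
    set E := Gp * (Yᵀ * Y) with hEdef
    rw [transpose_sub, transpose_mul, hEsym, Matrix.sub_mul, Matrix.mul_sub, Matrix.mul_sub]
    have c1 : E * Yᵀ * (Y * E) = Yᵀ * Y := by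
      rw [Matrix.mul_assoc E Yᵀ, ← Matrix.mul_assoc Yᵀ Y E, hGE, hEG]
    have c2 : E * Yᵀ * Y = Yᵀ * Y := by rw [Matrix.mul_assoc]; exact hEG
    have c3 : Yᵀ * (Y * E) = Yᵀ * Y := by rw [← Matrix.mul_assoc]; exact hGE
    rw [c1, c2, c3]
    simp
  have hYE : Y * (Gp * (Yᵀ * Y)) = Y := by
    have := eq_zero_of_transpose_mul_self _ hMM
    rwa [sub_eq_zero] at this
  set P := Y * Gp * Yᵀ with hPdef
  have hPY : P * Y = Y := by
    rw [hPdef, Matrix.mul_assoc, Matrix.mul_assoc]; exact hYE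
  have hPsym : Pᵀ = P := by rw [hPdef]; exact (proj_facts Y Gp hYE).1
  have hPP : P * P = P := by rw [hPdef]; exact (proj_facts Y Gp hYE).2
  set R := (1 : Matrix (Fin k ⊕ Fin m') (Fin k ⊕ Fin m') ℝ) - P with hRdef
  have hRsym : Rᵀ = R := by rw [hRdef, transpose_sub, transpose_one, hPsym]
  have hRR : R * R = R := by
    rw [hRdef]; simp [Matrix.sub_mul, Matrix.mul_sub, hPP]
  have hRY : R * Y = 0 := by rw [hRdef, Matrix.sub_mul, Matrix.one_mul, hPY, sub_self]
  set Vt1 := (V.submatrix id Sum.inl)ᵀ with hVt1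
  set Vt2 := (V.submatrix id Sum.inr)ᵀ with hVt2
  set F := S2 * (Vt2 * Ω) * Ω1p with hFdef
  have hVrows : Vᵀ = fromRows Vt1 Vt2 := by
    rw [hVt1, hVt2]
    ext i j
    cases i <;> rfl
  set Sg := Matrix.fromBlocks S1 (0 : Matrix (Fin k) (Fin n') ℝ)
    (0 : Matrix (Fin m') (Fin k) ℝ) S2 with hSg
  set B₀ := Matrix.fromBlocks (0 : Matrix (Fin k) (Fin k) ℝ) (0 : Matrix (Fin k) (Fin n') ℝ)
    (-F) S2 with hB₀
  have p1 : Sg * fromRows Vt1 Vt2 = fromRows (S1 * Vt1) (S2 * Vt2) := by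
    rw [hSg, fromBlocks_mul_fromRows]; simp
  have p2 : Sg * (fromRows Vt1 Vt2 * Ω) * Ω1p = fromRows S1 F := by
    rw [fromRows_mul, hSg, fromBlocks_mul_fromRows, fromRows_mul, Matrix.zero_mul,
      Matrix.zero_mul, add_zero, zero_add, Matrix.mul_assoc S1, hfull, Matrix.mul_one, hFdef]
  have pB : B₀ * fromRows Vt1 Vt2 = fromRows 0 (S2 * Vt2 - F * Vt1) := by
    rw [hB₀, fromBlocks_mul_fromRows, Matrix.zero_mul, Matrix.zero_mul, add_zero,
      Matrix.neg_mul, neg_add_eq_sub]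
  have hW : B₀ * Vᵀ = Sg * Vᵀ - Sg * (Vᵀ * Ω) * Ω1p * Vt1 := by
    calc B₀ * Vᵀ = fromRows 0 (S2 * Vt2 - F * Vt1) := by rw [hVrows, pB]
      _ = fromRows (S1 * Vt1) (S2 * Vt2) - fromRows (S1 * Vt1) (F * Vt1) := by
          ext i j
          cases i <;> simp [Matrix.sub_apply, fromRows_apply_inl, fromRows_apply_inr]
      _ = Sg * Vᵀ - Sg * (Vᵀ * Ω) * Ω1p * Vt1 := by
          rw [hVrows, p1, p2, fromRows_mul]
  have key : U * B₀ * Vᵀ = A - Y * Ω1p * Vt1 := by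
    rw [hYdef, hA, Matrix.mul_assoc U B₀ Vᵀ, hW, Matrix.mul_sub]
    simp only [Matrix.mul_assoc]
  have z : R * (Y * Ω1p * Vt1) = 0 := by
    rw [← Matrix.mul_assoc R (Y * Ω1p) Vt1, ← Matrix.mul_assoc R Y Ω1p, hRY,
      Matrix.zero_mul, Matrix.zero_mul]
  have main : R * (U * B₀ * Vᵀ) = A - P * A := by
    rw [key, Matrix.mul_sub, z, sub_zero, hRdef, Matrix.sub_mul, Matrix.one_mul]
  constructor
  · rw [← main]
    calc frobNorm (R * (U * B₀ * Vᵀ)) ^ 2 ≤ frobNorm (U * B₀ * Vᵀ) ^ 2 :=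
          frobSq_proj R hRsym hRR _
      _ = frobNorm (B₀ * Vᵀ) ^ 2 := by rw [Matrix.mul_assoc]; exact frobSq_orth_left U hU _
      _ = frobNorm B₀ ^ 2 := frobSq_orth_right Vᵀ (by rw [transpose_transpose]; exact hV) _
      _ = frobNorm (-F) ^ 2 + frobNorm S2 ^ 2 := by rw [hB₀]; exact frobSq_blocks (-F) S2
      _ = frobNorm S2 ^ 2 + frobNorm F ^ 2 := by rw [frobNorm_neg]; ring
  · rw [← main]
    have s1 : specNorm (R * (U * B₀ * Vᵀ)) ≤ specNorm B₀ := by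
      calc specNorm (R * (U * B₀ * Vᵀ)) ≤ specNorm R * specNorm (U * B₀ * Vᵀ) :=
            specNorm_mul_le _ _
        _ ≤ 1 * specNorm (U * B₀ * Vᵀ) :=
            mul_le_mul_of_nonneg_right (specNorm_le_one_of_proj R hRsym hRR)
              (specNorm_nonneg' _)
        _ = specNorm (U * (B₀ * Vᵀ)) := by rw [one_mul, Matrix.mul_assoc]
        _ ≤ specNorm U * specNorm (B₀ * Vᵀ) := specNorm_mul_le _ _
        _ ≤ 1 * specNorm (B₀ * Vᵀ) :=
            mul_le_mul_of_nonneg_right (specNorm_le_one_of_orth U hU) (specNorm_nonneg' _)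
        _ = specNorm (B₀ * Vᵀ) := one_mul _
        _ ≤ specNorm B₀ * specNorm Vᵀ := specNorm_mul_le _ _
        _ ≤ specNorm B₀ * 1 :=
            mul_le_mul_of_nonneg_left
              (specNorm_le_one_of_orth Vᵀ (by rw [transpose_transpose]; exact hV'))
              (specNorm_nonneg' _)
        _ = specNorm B₀ := mul_one _
    have s2 : specNorm B₀ ≤ Real.sqrt (specNorm S2 ^ 2 + specNorm F ^ 2) := by
      rw [hB₀]
      have h := specNorm_blocks_le (m₁ := Fin k) (-F) S2
      rwa [specNorm_neg, add_comm] at h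
    have s3 := le_trans s1 s2
    have h0 : (0:ℝ) ≤ specNorm S2 ^ 2 + specNorm F ^ 2 := by positivity
    calc specNorm (R * (U * B₀ * Vᵀ)) ^ 2
        ≤ Real.sqrt (specNorm S2 ^ 2 + specNorm F ^ 2) ^ 2 :=
          pow_le_pow_left₀ (specNorm_nonneg' _) s3 2
      _ = specNorm S2 ^ 2 + specNorm F ^ 2 := Real.sq_sqrt h0
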